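/- Lower bound on partial metrics of wrong sequences (constant modulus): let T ≥ 2, let Ω ⊂ ℂ be a finite set with at least two elements such that |a| = 1 for all a ∈ Ω, and let D_min = min{|a − b|² : a, b ∈ Ω, a ≠ b}. Let s, s̃ ∈ Ω^T, let i be an index with 1 ≤ i ≤ T − 1 such that s̃_i ≠ s_i and s̃_k = s_k for all k > i, and let R be an upper triangular T×T complex matrix with R* R = T·I − s s*. Then for every j with 1 ≤ j ≤ i, Σ_{l=j}^T |(R s̃)_l|² ≥ T·D_min/2. -/

import Mathlib

open Matrix Finset

theorem quadId (T : ℕ) (s : Fin T → ℂ) (R : Matrix (Fin T) (Fin T) ℂ)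
    (hR : Rᴴ * R = ((T : ℂ)) • (1 : Matrix (Fin T) (Fin T) ℂ) -
      Matrix.of fun a b => s a * star (s b)) (u : Fin T → ℂ) :
    ∑ l, (Complex.normSq ((R *ᵥ u) l) : ℝ)
      = T * (∑ k, Complex.normSq (u k)) - Complex.normSq (∑ k, star (s k) * u k) := by
  have key : (star (R *ᵥ u)) ⬝ᵥ (R *ᵥ u)
      = (T : ℂ) * (∑ k, star (u k) * u k) - (star (∑ k, star (s k) * u k)) * (∑ k, star (s k) * u k) := by
    have h1 : (star (R *ᵥ u)) ⬝ᵥ (R *ᵥ u) = star u ⬝ᵥ ((Rᴴ * R) *ᵥ u) := by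
      simp [star_mulVec, dotProduct_mulVec, vecMul_vecMul, mulVec_mulVec]
    rw [h1, hR, sub_mulVec, dotProduct_sub, smul_mulVec, one_mulVec]
    congr 1
    · simp only [dotProduct, Pi.smul_apply, smul_eq_mul, Finset.mul_sum, Pi.star_apply]
      exact Finset.sum_congr rfl fun x _ => by ring
    · have h2 : (Matrix.of fun a b => s a * star (s b)) *ᵥ u = fun a => s a * (∑ k, star (s k) * u k) := by
        ext a; simp [mulVec, dotProduct, Finset.mul_sum, mul_assoc]
      rw [h2]
      simp only [dotProduct, star_sum, Finset.sum_mul, Finset.mul_sum, StarMul.star_mul,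
        star_star, Pi.star_apply]
      rw [Finset.sum_comm]
      exact Finset.sum_congr rfl fun x _ => Finset.sum_congr rfl fun y _ => by ring
  have h4 : (star (∑ k, star (s k) * u k)) * (∑ k, star (s k) * u k)
      = ((Complex.normSq (∑ k, star (s k) * u k) : ℝ) : ℂ) := by
    rw [Complex.star_def, Complex.normSq_eq_conj_mul_self]
  have h5 : (∑ k, star (u k) * u k) = ((∑ k, (Complex.normSq (u k) : ℝ) : ℝ) : ℂ) := by
    push_cast
    exact Finset.sum_congr rfl fun x _ => by
      rw [Complex.star_def, Complex.normSq_eq_conj_mul_self]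
  have lhs : (star (R *ᵥ u)) ⬝ᵥ (R *ᵥ u) = ((∑ l, (Complex.normSq ((R *ᵥ u) l) : ℝ) : ℝ) : ℂ) := by
    push_cast
    simp only [dotProduct, Pi.star_apply]
    exact Finset.sum_congr rfl fun x _ => by
      rw [Complex.star_def, Complex.normSq_eq_conj_mul_self]
  rw [lhs, h4, h5] at key
  exact_mod_cast key

theorem arithAux (t ii n q : ℝ) (hq : 0 ≤ q) (hn : 0 ≤ n) (hi0 : 0 ≤ ii)
    (hqn : q ^ 2 ≤ ii * n) (hit : ii + 2 ≤ t) :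
    t * (1 + n) - (1 + q) ^ 2 ≥ t / 2 := by
  rcases eq_or_lt_of_le hi0 with h | h
  · have hq0 : q = 0 := by nlinarith
    subst hq0
    nlinarith [mul_nonneg (show (0:ℝ) ≤ t by linarith) hn]
  · have h2 : (0:ℝ) ≤ (t - ii) * t * (ii * n - q ^ 2) :=
      mul_nonneg (mul_nonneg (by linarith) (by linarith)) (by linarith)
    have h3 : 2 * ii ≤ (t - ii) * (t - 2) := by nlinarith
    nlinarith [sq_nonneg ((t - ii) * q - ii), h2, h3,
      mul_pos h (show (0:ℝ) < t - ii by linarith)]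

/-- **Lemma 1 of the paper (constant-modulus case).**
Let `Ω` be a finite constant-modulus constellation with at least two points and
minimum squared distance `Dmin`. If `s̃ ∈ Ω^T` differs from the transmitted `s ∈ Ω^T`
at a largest index `i ≤ T − 1` (indices here are `0`-based, so `1 ≤ i ≤ T−1` of the
paper becomes `(i : ℕ) + 1 < T`), and `R` is an upper triangular Cholesky factor with
`R* R = T·I − s s*`, then every partial metric `∑_{l ≥ j} |(R s̃)_l|²` for `j ≤ i` is at
least `T·Dmin/2`. -/
theorem wrong_sequence_metric_lower_bound (T : ℕ) (hT : 2 ≤ T)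
    (Ω : Finset ℂ) (hΩ : 2 ≤ Ω.card) (hmod : ∀ a ∈ Ω, ‖a‖ = 1)
    (Dmin : ℝ)
    (hD : IsLeast {d : ℝ | ∃ a ∈ Ω, ∃ b ∈ Ω, a ≠ b ∧ d = Complex.normSq (a - b)} Dmin)
    (s stld : Fin T → ℂ) (hs : ∀ k, s k ∈ Ω) (hstld : ∀ k, stld k ∈ Ω)
    (i : Fin T) (hi : (i : ℕ) + 1 < T)
    (hne : stld i ≠ s i) (htail : ∀ k : Fin T, i < k → stld k = s k)
    (R : Matrix (Fin T) (Fin T) ℂ)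
    (hupper : ∀ a b : Fin T, b < a → R a b = 0)
    (hR : Rᴴ * R = ((T : ℂ)) • (1 : Matrix (Fin T) (Fin T) ℂ) -
      Matrix.of fun a b => s a * star (s b)) :
    ∀ j : Fin T, j ≤ i →
      ∑ l ∈ Finset.Ici j, Complex.normSq ((R *ᵥ stld) l) ≥ (T : ℝ) * Dmin / 2 := by
  intro j hj
  have hone_s : ∀ k, Complex.normSq (s k) = 1 := fun k => by
    rw [← Complex.sq_norm, hmod _ (hs k)]; norm_num
  -- star z * z = normSq z for |z| facts
  have hstar_mul : ∀ z : ℂ, star z * z = ((Complex.normSq z : ℝ) : ℂ) := fun z => by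
    rw [Complex.star_def, Complex.normSq_eq_conj_mul_self]
  -- Cauchy-Schwarz helper
  have CS : ∀ (A : Finset (Fin T)) (w : Fin T → ℂ),
      ‖∑ k ∈ A, star (s k) * w k‖ ^ 2 ≤ (A.card : ℝ) * ∑ k ∈ A, Complex.normSq (w k) := by
    intro A w
    have h1 : ‖∑ k ∈ A, star (s k) * w k‖ ≤ ∑ k ∈ A, ‖w k‖ := by
      refine le_trans (norm_sum_le _ _) (le_of_eq ?_)
      refine Finset.sum_congr rfl fun k _ => ?_
      rw [norm_mul, show (star (s k)) = (starRingEnd ℂ) (s k) from rfl, Complex.norm_conj,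
        hmod _ (hs k), one_mul]
    calc ‖∑ k ∈ A, star (s k) * w k‖ ^ 2
        ≤ (∑ k ∈ A, ‖w k‖) ^ 2 := by
          exact pow_le_pow_left₀ (norm_nonneg _) h1 2
      _ ≤ (A.card : ℝ) * ∑ k ∈ A, ‖w k‖ ^ 2 := sq_sum_le_card_mul_sum_sq
      _ = (A.card : ℝ) * ∑ k ∈ A, Complex.normSq (w k) := by
          simp [Complex.sq_norm]
  -- R s = 0
  have hsum_s : (∑ k, star (s k) * s k) = ((T : ℝ) : ℂ) := by
    have : ∀ k : Fin T, star (s k) * s k = ((1 : ℝ) : ℂ) := fun k => by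
      rw [hstar_mul, hone_s]
    rw [Finset.sum_congr rfl fun k _ => this k]
    simp
  have hRs : R *ᵥ s = 0 := by
    have hq := quadId T s R hR s
    rw [show (∑ k, Complex.normSq (s k)) = (T : ℝ) by
        rw [Finset.sum_congr rfl fun k _ => hone_s k]; simp, hsum_s] at hq
    have hzero : ∑ l, Complex.normSq ((R *ᵥ s) l) = 0 := by
      rw [hq, Complex.normSq_ofReal]; ring
    funext l
    have := (Finset.sum_eq_zero_iff_of_nonneg
      (fun l _ => Complex.normSq_nonneg _)).mp hzero l (Finset.mem_univ l)
    simpa using Complex.normSq_eq_zero.mp this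
  -- difference vector
  set d : Fin T → ℂ := fun k => stld k - s k with hd
  have hd_supp : ∀ m : Fin T, i < m → d m = 0 := fun m hm => by
    simp [hd, htail m hm]
  have hRstld : R *ᵥ stld = R *ᵥ d := by
    have : stld = d + s := by funext k; simp [hd]
    rw [this, mulVec_add, hRs, add_zero]
  have hRst_gt : ∀ l : Fin T, i < l → (R *ᵥ stld) l = 0 := by
    intro l hl
    rw [hRstld]
    simp only [mulVec, dotProduct]
    refine Finset.sum_eq_zero fun m _ => ?_
    rcases lt_or_ge m l with h | h
    · rw [hupper l m h, zero_mul]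
    · rw [hd_supp m (lt_of_lt_of_le hl h), mul_zero]
  have hRst_i : (R *ᵥ stld) i = R i i * d i := by
    rw [hRstld]
    simp only [mulVec, dotProduct]
    refine Finset.sum_eq_single i (fun m _ hm => ?_) (fun h => absurd (Finset.mem_univ i) h)
    show R i m * d m = 0
    rcases lt_or_gt_of_ne hm with h | h
    · rw [hupper i m h, zero_mul]
    · rw [hd_supp m h, mul_zero]
  -- lower bound on |R i i|^2
  have hiT : ((i : ℕ) : ℝ) + 2 ≤ (T : ℝ) := by exact_mod_cast hi
  have hRii : (T : ℝ) / 2 ≤ Complex.normSq (R i i) := by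
    classical
    set B : Matrix (Fin T) (Fin T) ℂ :=
      Matrix.of (fun a b => if a < i ∧ b < i then R a b else if a = b then 1 else 0) with hBdef
    have hBrow : ∀ (w : Fin T → ℂ) (a : Fin T), ¬ a < i → (B *ᵥ w) a = w a := by
      intro w a ha
      simp only [mulVec, dotProduct]
      rw [Finset.sum_eq_single a]
      · simp [hBdef, ha]
      · intro b _ hb
        have : B a b = 0 := by simp [hBdef, ha, Ne.symm hb]
        rw [this, zero_mul]
      · intro h; exact absurd (Finset.mem_univ a) h
    have hBinj : Function.Injective B.mulVecLin := by
      rw [injective_iff_map_eq_zero]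
      intro w hw
      have hw' : B *ᵥ w = 0 := hw
      have h0 : ∀ a : Fin T, ¬ a < i → w a = 0 := by
        intro a ha
        rw [← hBrow w a ha, hw']; rfl
      have hRw : R *ᵥ w = 0 := by
        funext l
        show (R *ᵥ w) l = 0
        rcases lt_or_ge l i with hl | hl
        · have hBl := congrFun hw' l
          rw [show ((0 : Fin T → ℂ)) l = 0 from rfl] at hBl
          rw [← hBl]
          simp only [mulVec, dotProduct]
          refine Finset.sum_congr rfl fun m _ => ?_
          rcases lt_or_ge m i with hm | hm
          · have : B l m = R l m := by simp [hBdef, hl, hm]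
            rw [this]
          · rw [h0 m (not_lt.mpr hm), mul_zero, mul_zero]
        · simp only [mulVec, dotProduct]
          refine Finset.sum_eq_zero fun m _ => ?_
          rcases lt_or_ge m l with hm | hm
          · rw [hupper l m hm, zero_mul]
          · rw [h0 m (not_lt.mpr (le_trans hl hm)), mul_zero]
      have hq := quadId T s R hR w
      rw [hRw] at hq
      simp only [Pi.zero_apply, Complex.normSq_zero, Finset.sum_const, smul_zero] at hq
      have hsupp : ∀ k, k ∉ Finset.Iio i → w k = 0 := fun k hk =>
        h0 k (by simpa using hk)
      have hsum1 : (∑ k, Complex.normSq (w k)) = ∑ k ∈ Finset.Iio i, Complex.normSq (w k) :=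
        (Finset.sum_subset (Finset.subset_univ _)
          (fun k _ hk => by rw [hsupp k hk]; simp)).symm
      have hsum2 : (∑ k, star (s k) * w k) = ∑ k ∈ Finset.Iio i, star (s k) * w k :=
        (Finset.sum_subset (Finset.subset_univ _)
          (fun k _ hk => by rw [hsupp k hk, mul_zero])).symm
      have hcs := CS (Finset.Iio i) w
      rw [Fin.card_Iio] at hcs
      rw [hsum1, hsum2] at hq
      rw [← Complex.sq_norm] at hq
      set n' := ∑ k ∈ Finset.Iio i, Complex.normSq (w k) with hn'
      have hn'0 : 0 ≤ n' := Finset.sum_nonneg fun k _ => Complex.normSq_nonneg _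
      have hn'z : n' = 0 := by nlinarith
      have hwz : ∀ k ∈ Finset.Iio i, w k = 0 := by
        intro k hk
        have := (Finset.sum_eq_zero_iff_of_nonneg
          (fun k _ => Complex.normSq_nonneg (w k))).mp hn'z k hk
        exact Complex.normSq_eq_zero.mp this
      funext k
      rcases lt_or_ge k i with hk | hk
      · exact hwz k (Finset.mem_Iio.mpr hk)
      · exact h0 k (not_lt.mpr hk)
    have hBsurj : Function.Surjective B.mulVecLin :=
      LinearMap.injective_iff_surjective.mp hBinj
    obtain ⟨w, hw⟩ := hBsurj (fun l => if l < i then -(R l i) else 0)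
    have hw' : B *ᵥ w = fun l => if l < i then -(R l i) else 0 := hw
    have hw0 : ∀ a : Fin T, ¬ a < i → w a = 0 := by
      intro a ha
      have := (hBrow w a ha).symm.trans (congrFun hw' a)
      rwa [if_neg ha] at this
    set u : Fin T → ℂ := fun m => if m = i then 1 else w m with hu
    have hwi : w i = 0 := hw0 i (lt_irrefl i)
    have hu_lt : ∀ m : Fin T, m ≠ i → u m = w m := fun m hm => by simp [hu, hm]
    have hu_gt : ∀ m : Fin T, i < m → u m = 0 := fun m hm => by
      rw [hu_lt m (ne_of_gt hm), hw0 m (not_lt.mpr (le_of_lt hm))]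
    have hRu_lt : ∀ l : Fin T, l < i → (R *ᵥ u) l = 0 := by
      intro l hl
      have hterm : ∀ m : Fin T, R l m * u m = B l m * w m + (if m = i then R l i else 0) := by
        intro m
        rcases eq_or_ne m i with rfl | hm
        · rw [if_pos rfl, hwi, mul_zero, zero_add, show u m = 1 by simp [hu], mul_one]
        · rw [if_neg hm, add_zero, hu_lt m hm]
          rcases lt_or_ge m i with h2 | h2
          · have : B l m = R l m := by simp [hBdef, hl, h2]
            rw [this]
          · rw [hw0 m (not_lt.mpr h2), mul_zero, mul_zero]
      show (R *ᵥ u) l = 0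
      simp only [mulVec, dotProduct]
      calc (∑ m, R l m * u m)
          = ∑ m, (B l m * w m + (if m = i then R l i else 0)) :=
            Finset.sum_congr rfl fun m _ => hterm m
        _ = (B *ᵥ w) l + R l i := by
            rw [Finset.sum_add_distrib, Finset.sum_ite_eq' Finset.univ i (fun _ => R l i)]
            simp [mulVec, dotProduct]
        _ = 0 := by rw [hw']; simp [hl]
    have hRu_gt : ∀ l : Fin T, i < l → (R *ᵥ u) l = 0 := by
      intro l hl
      show (R *ᵥ u) l = 0
      simp only [mulVec, dotProduct]
      refine Finset.sum_eq_zero fun m _ => ?_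
      rcases lt_or_ge m l with hm | hm
      · rw [hupper l m hm, zero_mul]
      · rw [hu_gt m (lt_of_lt_of_le hl hm), mul_zero]
    have hRu_i : (R *ᵥ u) i = R i i := by
      show (R *ᵥ u) i = R i i
      simp only [mulVec, dotProduct]
      rw [Finset.sum_eq_single i (fun m _ hm => ?_) (fun h => absurd (Finset.mem_univ i) h)]
      · rw [show u i = 1 by simp [hu], mul_one]
      · rcases lt_or_gt_of_ne hm with h | h
        · rw [hupper i m h, zero_mul]
        · rw [hu_gt m h, mul_zero]
    have hq := quadId T s R hR u
    have hLHS : (∑ l, Complex.normSq ((R *ᵥ u) l)) = Complex.normSq (R i i) := by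
      rw [Finset.sum_eq_single i (fun l _ hl => ?_) (fun h => absurd (Finset.mem_univ i) h)]
      · rw [hRu_i]
      · rcases lt_or_gt_of_ne hl with h | h
        · rw [hRu_lt l h, Complex.normSq_zero]
        · rw [hRu_gt l h, Complex.normSq_zero]
    set n := ∑ k ∈ Finset.Iio i, Complex.normSq (w k) with hn
    have hn0 : 0 ≤ n := Finset.sum_nonneg fun k _ => Complex.normSq_nonneg _
    have hnotmem : i ∉ Finset.Iio i := by simp
    have hsumu : (∑ k, Complex.normSq (u k)) = 1 + n := by
      rw [← Finset.sum_subset (Finset.subset_univ (insert i (Finset.Iio i)))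
        (fun k _ hk => ?_)]
      · rw [Finset.sum_insert hnotmem, show u i = 1 by simp [hu], Complex.normSq_one]
        congr 1
        exact Finset.sum_congr rfl fun k hk => by
          rw [hu_lt k (by rintro rfl; exact absurd hk hnotmem)]
      · have h1 : k ≠ i := fun h => hk (by rw [h]; exact Finset.mem_insert_self _ _)
        have h2 : ¬ k < i := fun h =>
          hk (Finset.mem_insert_of_mem (Finset.mem_Iio.mpr h))
        rw [hu_lt k h1, hw0 k h2, Complex.normSq_zero]
    set dd := ∑ k ∈ Finset.Iio i, star (s k) * w k with hdd
    have hsumc : (∑ k, star (s k) * u k) = star (s i) + dd := by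
      rw [← Finset.sum_subset (Finset.subset_univ (insert i (Finset.Iio i)))
        (fun k _ hk => ?_)]
      · rw [Finset.sum_insert hnotmem, show u i = 1 by simp [hu], mul_one]
        congr 1
        exact Finset.sum_congr rfl fun k hk => by
          rw [hu_lt k (by rintro rfl; exact absurd hk hnotmem)]
      · have h1 : k ≠ i := fun h => hk (by rw [h]; exact Finset.mem_insert_self _ _)
        have h2 : ¬ k < i := fun h =>
          hk (Finset.mem_insert_of_mem (Finset.mem_Iio.mpr h))
        rw [hu_lt k h1, hw0 k h2, mul_zero]
    set q := ‖dd‖ with hqdef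
    have hq0 : 0 ≤ q := norm_nonneg _
    have hcs := CS (Finset.Iio i) w
    rw [Fin.card_Iio] at hcs
    have hq2 : q ^ 2 ≤ ((i : ℕ) : ℝ) * n := hcs
    have hnormc : Complex.normSq (star (s i) + dd) ≤ (1 + q) ^ 2 := by
      rw [← Complex.sq_norm]
      have habs : ‖star (s i) + dd‖ ≤ 1 + q := by
        refine le_trans (norm_add_le _ _) ?_
        rw [show (star (s i)) = (starRingEnd ℂ) (s i) from rfl, Complex.norm_conj,
          hmod _ (hs i)]
      exact pow_le_pow_left₀ (norm_nonneg _) habs 2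
    rw [hLHS, hsumu, hsumc] at hq
    have hfin : (T : ℝ) * (1 + n) - (1 + q) ^ 2 ≥ (T : ℝ) / 2 :=
      arithAux (T : ℝ) ((i : ℕ) : ℝ) n q hq0 hn0 (Nat.cast_nonneg _) hq2 hiT
    rw [hq]
    linarith [hnormc]
  -- final assembly
  have hDpos : 0 ≤ Dmin := by
    obtain ⟨a, -, b, -, -, heq⟩ := hD.1
    rw [heq]; exact Complex.normSq_nonneg _
  have hDle : Dmin ≤ Complex.normSq (d i) :=
    hD.2 ⟨stld i, hstld i, s i, hs i, hne, rfl⟩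
  have htail_sum : (∑ l ∈ Finset.Ici i, Complex.normSq ((R *ᵥ stld) l))
      = Complex.normSq (R i i) * Complex.normSq (d i) := by
    rw [Finset.sum_eq_single_of_mem i (Finset.mem_Ici.mpr le_rfl) (fun l hl hli => ?_)]
    · rw [hRst_i, Complex.normSq_mul]
    · rw [hRst_gt l (lt_of_le_of_ne (Finset.mem_Ici.mp hl) (Ne.symm hli)),
        Complex.normSq_zero]
  have hmono : (∑ l ∈ Finset.Ici i, Complex.normSq ((R *ᵥ stld) l))
      ≤ ∑ l ∈ Finset.Ici j, Complex.normSq ((R *ᵥ stld) l) :=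
    Finset.sum_le_sum_of_subset_of_nonneg (Finset.Ici_subset_Ici.mpr hj)
      (fun _ _ _ => Complex.normSq_nonneg _)
  have : (T : ℝ) * Dmin / 2 ≤ Complex.normSq (R i i) * Complex.normSq (d i) := by
    calc (T : ℝ) * Dmin / 2 = ((T : ℝ) / 2) * Dmin := by ring
      _ ≤ Complex.normSq (R i i) * Complex.normSq (d i) :=
          mul_le_mul hRii hDle hDpos (le_trans (by positivity) hRii)
  rw [ge_iff_le]
  calc (T : ℝ) * Dmin / 2 ≤ Complex.normSq (R i i) * Complex.normSq (d i) := this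
    _ = ∑ l ∈ Finset.Ici i, Complex.normSq ((R *ᵥ stld) l) := htail_sum.symm
    _ ≤ _ := hmono
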